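/- Fix d ≥ 2 and k ≥ 1. There exists ℓ = k·2^d such that the following holds. Suppose r > 0 and U, V ⊆ ℝ^d with V finite and |B(u,r) ∩ V| ≤ k for all u ∈ U. Then V can be written as V = V₁ ∪ ... ∪ V_ℓ where each V_i is contained in a single (closed) orthant of ℝ^d and |B(u, r/4) ∩ V_i| ≤ 1 for every u ∈ U and every 1 ≤ i ≤ ℓ. -/

import Mathlib

open Finset in
lemma exists_sep_coloring {E : Type*} [MetricSpace E]
    (k : ℕ) (hk : 1 ≤ k) (ρ : ℝ) (hρ : 0 < ρ) (S : Finset E) :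
    (∀ x ∈ S, (S.filter (fun y => dist x y < ρ)).card ≤ k) →
    ∃ c : E → Fin k, ∀ x ∈ S, ∀ y ∈ S, c x = c y → x ≠ y → ρ ≤ dist x y := by
  classical
  induction S using Finset.induction_on with
  | empty => exact fun _ => ⟨fun _ => ⟨0, hk⟩, by simp⟩
  | insert a S ha IH =>
    intro h
    obtain ⟨c, hc⟩ := IH (fun x hx => by
      refine le_trans (Finset.card_le_card ?_) (h x (Finset.mem_insert_of_mem hx))
      exact Finset.filter_subset_filter _ (Finset.subset_insert a S) |>.trans (le_refl _))
    set N := S.filter (fun y => dist a y < ρ) with hN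
    have hNcard : N.card < k := by
      have ha' : a ∈ (insert a S).filter (fun y => dist a y < ρ) := by
        simp [Finset.mem_insert_self, hρ]
      have : insert a N ⊆ (insert a S).filter (fun y => dist a y < ρ) := by
        intro y hy
        rcases Finset.mem_insert.mp hy with rfl | hy
        · exact ha'
        · simp only [hN, Finset.mem_filter] at hy
          exact Finset.mem_filter.mpr ⟨Finset.mem_insert_of_mem hy.1, hy.2⟩
      have haN : a ∉ N := fun hc => ha (Finset.mem_filter.mp hc).1
      have := (Finset.card_insert_of_notMem haN) ▸ Finset.card_le_card this
      have := this.trans (h a (Finset.mem_insert_self a S))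
      omega
    have : ∃ col : Fin k, col ∉ N.image c := by
      by_contra hcon
      push_neg at hcon
      have : (Finset.univ : Finset (Fin k)) ⊆ N.image c := fun col _ => hcon col
      have := Finset.card_le_card this
      simp only [Finset.card_univ, Fintype.card_fin] at this
      have := (Finset.card_image_le (s := N) (f := c)).trans_lt hNcard
      omega
    obtain ⟨col, hcol⟩ := this
    refine ⟨Function.update c a col, ?_⟩
    intro x hx y hy hxy hne
    rcases Finset.mem_insert.mp hx with hxe | hx' <;> rcases Finset.mem_insert.mp hy with hye | hy'
    · exact absurd (hxe.trans hye.symm) hne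
    · -- x = a, y ∈ S
      have hya : y ≠ a := fun h => ha (h ▸ hy')
      rw [hxe, Function.update_self, Function.update_of_ne hya] at hxy
      rw [hxe]
      by_contra hlt
      push_neg at hlt
      exact hcol (Finset.mem_image.mpr ⟨y, Finset.mem_filter.mpr ⟨hy', hlt⟩, hxy.symm⟩)
    · have hxa : x ≠ a := fun h => ha (h ▸ hx')
      rw [hye, Function.update_of_ne hxa, Function.update_self] at hxy
      rw [hye, dist_comm]
      by_contra hlt
      push_neg at hlt
      exact hcol (Finset.mem_image.mpr ⟨x, Finset.mem_filter.mpr ⟨hx', hlt⟩, hxy⟩)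
    · have hxa : x ≠ a := fun h => ha (h ▸ hx')
      have hya : y ≠ a := fun h => ha (h ▸ hy')
      rw [Function.update_of_ne hxa, Function.update_of_ne hya] at hxy
      exact hc x hx' y hy' hxy hne



/-- Fix `d ≥ 2` and `k ≥ 1`, and set `ℓ = k·2^d`.  Suppose `r > 0` and `U, V ⊆ ℝ^d`
with `V` finite and `|B(u,r) ∩ V| ≤ k` for every `u ∈ U`.  Then `V` can be written as
`V = V₁ ∪ … ∪ V_ℓ` where each `Vᵢ` is contained in a single closed orthant of `ℝ^d`
and `|B(u, r/4) ∩ Vᵢ| ≤ 1` for every `u ∈ U` and every `i`. -/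
theorem orthant_decomposition (d k : ℕ) (hd : 2 ≤ d) (hk : 1 ≤ k)
    (r : ℝ) (hr : 0 < r)
    (U V : Set (EuclideanSpace ℝ (Fin d))) (hVfin : V.Finite)
    (hUV : ∀ u ∈ U, (Metric.ball u r ∩ V).ncard ≤ k) :
    ∃ Vs : Fin (k * 2 ^ d) → Set (EuclideanSpace ℝ (Fin d)),
      V = ⋃ i, Vs i ∧
      (∀ i, ∃ σ : Fin d → ℝ, (∀ j, σ j = 1 ∨ σ j = -1) ∧
        ∀ x ∈ Vs i, ∀ j, 0 ≤ x j * σ j) ∧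
      (∀ i, ∀ u ∈ U, (Metric.ball u (r / 4) ∩ Vs i).ncard ≤ 1) := by
  classical
  let sgn : ℝ → Fin 2 := fun t => if 0 ≤ t then 0 else 1
  let code : EuclideanSpace ℝ (Fin d) → Fin (2 ^ d) :=
    fun x => finFunctionFinEquiv (fun j => sgn (x j))
  let S : Finset (EuclideanSpace ℝ (Fin d)) :=
    hVfin.toFinset.filter (fun x => ∃ u ∈ U, dist x u < r / 4)
  have hS : ∀ x ∈ S, (S.filter (fun y => dist x y < r / 2)).card ≤ k := by
    intro x hx
    simp only [S, Finset.mem_filter, Set.Finite.mem_toFinset] at hx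
    obtain ⟨hxV, u, hu, hxu⟩ := hx
    have hsub : ((S.filter (fun y => dist x y < r / 2) : Finset (EuclideanSpace ℝ (Fin d)))
        : Set (EuclideanSpace ℝ (Fin d))) ⊆ Metric.ball u r ∩ V := by
      intro y hy
      simp only [Finset.coe_filter, Set.mem_setOf_eq, S, Finset.mem_filter,
        Set.Finite.mem_toFinset] at hy
      obtain ⟨⟨hyV, -⟩, hyx⟩ := hy
      refine ⟨Metric.mem_ball.mpr ?_, hyV⟩
      calc dist y u ≤ dist y x + dist x u := dist_triangle _ _ _
        _ < r / 2 + r / 4 := by rw [dist_comm y x]; exact add_lt_add hyx hxu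
        _ < r := by linarith
    calc (S.filter (fun y => dist x y < r / 2)).card
        = ((S.filter (fun y => dist x y < r / 2) : Finset (EuclideanSpace ℝ (Fin d)))
            : Set (EuclideanSpace ℝ (Fin d))).ncard := (Set.ncard_coe_finset _).symm
      _ ≤ (Metric.ball u r ∩ V).ncard :=
          Set.ncard_le_ncard hsub (hVfin.inter_of_right _)
      _ ≤ k := hUV u hu
  obtain ⟨c, hc⟩ := exists_sep_coloring k hk (r / 2) (by linarith) S hS
  refine ⟨fun i => {x | x ∈ V ∧ c x = (finProdFinEquiv.symm i).1
    ∧ code x = (finProdFinEquiv.symm i).2}, ?_, ?_, ?_⟩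
  · ext x
    constructor
    · intro hx
      exact Set.mem_iUnion.mpr ⟨finProdFinEquiv (c x, code x), by
        simp only [Set.mem_setOf_eq, Equiv.symm_apply_apply]
        exact ⟨hx, trivial, trivial⟩⟩
    · intro hx
      obtain ⟨i, hxi⟩ := Set.mem_iUnion.mp hx
      exact hxi.1
  · intro i
    refine ⟨fun j => if finFunctionFinEquiv.symm (finProdFinEquiv.symm i).2 j = (0 : Fin 2)
      then (1 : ℝ) else -1, fun j => by dsimp only; split <;> simp, ?_⟩
    intro x hx j
    obtain ⟨hxV, -, hcode⟩ := hx
    have hcj : finFunctionFinEquiv.symm (finProdFinEquiv.symm i).2 j = sgn (x j) := by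
      rw [← hcode]
      simp [code, Equiv.symm_apply_apply]
    dsimp only
    rw [hcj]
    by_cases h0 : 0 ≤ x j
    · simp [sgn, h0]
    · push_neg at h0
      have hs1 : sgn (x j) = 1 := by simp [sgn, not_le.mpr h0]
      rw [hs1]
      simp only [Fin.one_eq_zero_iff, OfNat.ofNat_ne_one, if_false]
      nlinarith
  · intro i u hu
    have hsub : (Metric.ball u (r / 4) ∩ {x | x ∈ V ∧ c x = (finProdFinEquiv.symm i).1
        ∧ code x = (finProdFinEquiv.symm i).2}).Subsingleton := by
      rintro x ⟨hxb, hxV, hcx, -⟩ y ⟨hyb, hyV, hcy, -⟩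
      have hxS : x ∈ S := by
        simp only [S, Finset.mem_filter, Set.Finite.mem_toFinset]
        exact ⟨hxV, u, hu, Metric.mem_ball.mp hxb⟩
      have hyS : y ∈ S := by
        simp only [S, Finset.mem_filter, Set.Finite.mem_toFinset]
        exact ⟨hyV, u, hu, Metric.mem_ball.mp hyb⟩
      by_contra hne
      have hsep := hc x hxS y hyS (hcx.trans hcy.symm) hne
      have hlt : dist x y < r / 2 := by
        calc dist x y ≤ dist x u + dist u y := dist_triangle _ _ _
          _ < r / 4 + r / 4 := add_lt_add (Metric.mem_ball.mp hxb)
              (by rw [dist_comm]; exact Metric.mem_ball.mp hyb)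
          _ = r / 2 := by ring
      linarith
    show (Metric.ball u (r / 4) ∩ {x | x ∈ V ∧ c x = (finProdFinEquiv.symm i).1
        ∧ code x = (finProdFinEquiv.symm i).2}).ncard ≤ 1
    rcases hsub.eq_empty_or_singleton with h | ⟨x, h⟩
    · rw [h]; simp
    · rw [h]; simp
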